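/- arXiv:2502.12496 — 2 statements merged into one kernel-verified Lean document; each statement's English description precedes it below -/
import Mathlib

section
/- For every n ≥ 1, the n-th derivative of the logistic sigmoid σ(x) = 1/(1+e^{−x}) satisfies |σ^{(n)}(x)| ≤ n! for all real x. -/
open Real

/-- The logistic sigmoid function. -/
noncomputable def sigmoid (x : ℝ) : ℝ := 1 / (1 + Real.exp (-x))

lemma one_add_exp_pos (x : ℝ) : 0 < 1 + Real.exp (-x) := by positivity

lemma sigmoid_nonneg (x : ℝ) : 0 ≤ _root_.sigmoid x := by
  unfold _root_.sigmoid; positivity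

lemma sigmoid_le_one (x : ℝ) : _root_.sigmoid x ≤ 1 := by
  unfold _root_.sigmoid
  rw [div_le_one (one_add_exp_pos x)]
  nlinarith [Real.exp_pos (-x)]

lemma hasDerivAt_sigmoid (x : ℝ) :
    HasDerivAt _root_.sigmoid (_root_.sigmoid x * (1 - _root_.sigmoid x)) x := by
  have h1 : HasDerivAt (fun x : ℝ => 1 + Real.exp (-x)) (-Real.exp (-x)) x := by
    simpa using ((Real.hasDerivAt_exp (-x)).comp x (hasDerivAt_neg x)).const_add 1
  have h2 := h1.inv (ne_of_gt (one_add_exp_pos x))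
  have hfe : _root_.sigmoid = fun x : ℝ => (1 + Real.exp (-x))⁻¹ := by
    funext y; simp [_root_.sigmoid, one_div]
  rw [hfe]
  refine h2.congr_deriv ?_
  have hpos := one_add_exp_pos x
  have hne : (1 + Real.exp (-x)) ≠ 0 := ne_of_gt hpos
  show - -Real.exp (-x) / (1 + Real.exp (-x)) ^ 2 = (1 + Real.exp (-x))⁻¹ * (1 - (1 + Real.exp (-x))⁻¹)
  field_simp
  ring

/-- a term `c * σ^a * (1-σ)^b` -/
noncomputable def tm (p : ℝ × ℕ × ℕ) (x : ℝ) : ℝ :=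
  p.1 * _root_.sigmoid x ^ p.2.1 * (1 - _root_.sigmoid x) ^ p.2.2

lemma hasDerivAt_tm (c : ℝ) (a b : ℕ) (ha : 1 ≤ a) (hb : 1 ≤ b) (x : ℝ) :
    HasDerivAt (tm (c, a, b))
      (tm (c * a, a, b + 1) x + tm (-(c * b), a + 1, b) x) x := by
  obtain ⟨a, rfl⟩ : ∃ a', a = a' + 1 := ⟨a - 1, (Nat.succ_pred_eq_of_pos ha).symm⟩
  obtain ⟨b, rfl⟩ : ∃ b', b = b' + 1 := ⟨b - 1, (Nat.succ_pred_eq_of_pos hb).symm⟩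
  have hs := _root_.hasDerivAt_sigmoid x
  set s := _root_.sigmoid x with hsdef
  have h1 : HasDerivAt (fun x => _root_.sigmoid x ^ (a + 1))
      ((a + 1 : ℕ) * s ^ a * (s * (1 - s))) x := by
    exact (hs.pow (a + 1)).congr_deriv (by simp [← hsdef])
  have hs' : HasDerivAt (fun x => 1 - _root_.sigmoid x) (-(s * (1 - s))) x := hs.const_sub 1
  have h2 : HasDerivAt (fun x => (1 - _root_.sigmoid x) ^ (b + 1))
      ((b + 1 : ℕ) * (1 - s) ^ b * (-(s * (1 - s)))) x := by
    exact (hs'.pow (b + 1)).congr_deriv (by simp [← hsdef])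
  have h3 := (h1.mul h2).const_mul c
  have h4 : tm (c, a + 1, b + 1) = fun y => c * (_root_.sigmoid y ^ (a + 1) * (1 - _root_.sigmoid y) ^ (b + 1)) := by
    funext y; simp only [tm]; ring
  rw [h4]
  refine h3.congr_deriv ?_
  simp only [tm]
  push_cast
  ring

/-- sum of a list of terms -/
noncomputable def evalL (l : List (ℝ × ℕ × ℕ)) (x : ℝ) : ℝ :=
  (l.map (fun p => tm p x)).sum

/-- formal derivative of a list of terms -/
def DL (l : List (ℝ × ℕ × ℕ)) : List (ℝ × ℕ × ℕ) :=
  l.flatMap (fun p => [(p.1 * p.2.1, p.2.1, p.2.2 + 1), (-(p.1 * p.2.2), p.2.1 + 1, p.2.2)])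

/-- sum of absolute values of coefficients -/
noncomputable def csum (l : List (ℝ × ℕ × ℕ)) : ℝ :=
  (l.map (fun p => |p.1|)).sum

lemma hasDerivAt_evalL (l : List (ℝ × ℕ × ℕ))
    (hl : ∀ p ∈ l, 1 ≤ p.2.1 ∧ 1 ≤ p.2.2) (x : ℝ) :
    HasDerivAt (fun y => evalL l y) (evalL (DL l) x) x := by
  induction l with
  | nil => simpa [evalL, DL] using hasDerivAt_const x (0 : ℝ)
  | cons p l ih =>
    obtain ⟨c, a, b⟩ := p
    have hp := hl (c, a, b) (List.mem_cons_self)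
    have hterm := hasDerivAt_tm c a b hp.1 hp.2 x
    have hrest := ih (fun q hq => hl q (List.mem_cons_of_mem _ hq))
    have := hterm.add hrest
    simp only [evalL, DL, List.flatMap_cons, List.map_cons, List.map_append, List.sum_cons,
      List.sum_append] at this ⊢
    refine this.congr_deriv ?_
    simp [add_assoc]

lemma csum_DL (l : List (ℝ × ℕ × ℕ)) (n : ℕ)
    (hl : ∀ p ∈ l, p.2.1 + p.2.2 = n + 1) :
    csum (DL l) = (n + 1 : ℝ) * csum l := by
  induction l with
  | nil => simp [csum, DL]
  | cons p l ih =>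
    obtain ⟨c, a, b⟩ := p
    have hp := hl (c, a, b) (List.mem_cons_self)
    have hrest := ih (fun q hq => hl q (List.mem_cons_of_mem _ hq))
    simp only [DL, List.flatMap_cons, csum, List.map_cons, List.map_append, List.sum_cons,
      List.sum_append] at hrest ⊢
    have hab : (a : ℝ) + b = n + 1 := by exact_mod_cast congrArg Nat.cast hp
    have h1 : |c * (a : ℕ)| = |c| * a := by
      rw [abs_mul]; simp
    have h2 : |-(c * (b : ℕ))| = |c| * b := by
      rw [abs_neg, abs_mul]; simp
    simp only [List.map_nil, List.sum_nil] at hrest ⊢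
    rw [h1, h2, hrest]
    linear_combination |c| * hab

lemma abs_evalL_le (l : List (ℝ × ℕ × ℕ)) (x : ℝ) :
    |evalL l x| ≤ csum l := by
  induction l with
  | nil => simp [evalL, csum]
  | cons p l ih =>
    obtain ⟨c, a, b⟩ := p
    have h0 : 0 ≤ _root_.sigmoid x := sigmoid_nonneg x
    have h1 : _root_.sigmoid x ≤ 1 := sigmoid_le_one x
    have hterm : |tm (c, a, b) x| ≤ |c| := by
      simp only [tm, abs_mul]
      have hsa : |_root_.sigmoid x ^ a| ≤ 1 := by
        rw [abs_pow]; exact pow_le_one₀ (abs_nonneg _) (by rw [abs_of_nonneg h0]; exact h1)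
      have hsb : |(1 - _root_.sigmoid x) ^ b| ≤ 1 := by
        rw [abs_pow]
        exact pow_le_one₀ (abs_nonneg _) (by rw [abs_of_nonneg (by linarith)]; linarith)
      calc |c| * |_root_.sigmoid x ^ a| * |(1 - _root_.sigmoid x) ^ b|
          ≤ |c| * 1 * 1 := by
            apply mul_le_mul (mul_le_mul le_rfl hsa (abs_nonneg _) (abs_nonneg _)) hsb
              (abs_nonneg _) (by positivity)
        _ = |c| := by ring
    simp only [evalL, csum, List.map_cons, List.sum_cons] at ih ⊢
    calc |tm (c, a, b) x + (l.map (fun p => tm p x)).sum|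
        ≤ |tm (c, a, b) x| + |(l.map (fun p => tm p x)).sum| := abs_add_le _ _
      _ ≤ |c| + (l.map (fun p => |p.1|)).sum := add_le_add hterm ih

lemma sigmoid_repr (n : ℕ) (hn : 1 ≤ n) :
    ∃ l : List (ℝ × ℕ × ℕ),
      (∀ p ∈ l, 1 ≤ p.2.1 ∧ 1 ≤ p.2.2 ∧ p.2.1 + p.2.2 = n + 1) ∧
      csum l ≤ (n.factorial : ℝ) ∧
      ∀ x, iteratedDeriv n _root_.sigmoid x = evalL l x := by
  induction n, hn using Nat.le_induction with
  | base =>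
    refine ⟨[(1, 1, 1)], ?_, ?_, ?_⟩
    · rintro p hp
      simp only [List.mem_singleton] at hp
      subst hp; exact ⟨le_refl 1, le_refl 1, rfl⟩
    · simp [csum]
    · intro x
      rw [iteratedDeriv_one, (_root_.hasDerivAt_sigmoid x).deriv]
      simp [evalL, tm]
  | succ n hn ih =>
    obtain ⟨l, hgood, hcs, heq⟩ := ih
    refine ⟨DL l, ?_, ?_, ?_⟩
    · intro p hp
      simp only [DL, List.mem_flatMap] at hp
      obtain ⟨q, hq, hpq⟩ := hp
      obtain ⟨cq, aq, bq⟩ := q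
      obtain ⟨h1, h2, h3⟩ := hgood _ hq
      simp only at h1 h2 h3
      simp only [List.mem_cons, List.mem_singleton] at hpq
      rcases hpq with rfl | rfl | h
      · exact ⟨h1, by dsimp only; omega, by dsimp only; omega⟩
      · exact ⟨by dsimp only; omega, h2, by dsimp only; omega⟩
      · exact absurd h List.not_mem_nil
    · rw [csum_DL l n (fun p hp => (hgood p hp).2.2)]
      calc (n + 1 : ℝ) * csum l ≤ (n + 1 : ℝ) * n.factorial := by
            apply mul_le_mul_of_nonneg_left hcs (by positivity)
        _ = ((n + 1).factorial : ℝ) := by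
            rw [Nat.factorial_succ]; push_cast; ring
    · intro x
      rw [iteratedDeriv_succ]
      have hfun : iteratedDeriv n _root_.sigmoid = fun y => evalL l y := funext heq
      rw [hfun]
      exact (hasDerivAt_evalL l (fun p hp => ⟨(hgood p hp).1, (hgood p hp).2.1⟩) x).deriv

/-- For every `n ≥ 1`, `|σ^{(n)}(x)| ≤ n!` for all real `x`. -/
theorem abs_iteratedDeriv_sigmoid_le (n : ℕ) (hn : 1 ≤ n) (x : ℝ) :
    |iteratedDeriv n _root_.sigmoid x| ≤ (n.factorial : ℝ) := by
  obtain ⟨l, _, hcs, heq⟩ := sigmoid_repr n hn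
  rw [heq x]
  exact le_trans (abs_evalL_le l x) hcs
end

section
/- For arbitrary real sequences (A_ν) and (B_ν) indexed by finitely supported multiindices and any multiindex ν, ∑_{m ≤ ν} C(ν,m) (∑_{w ≤ m} A_w S(m,w)) (∑_{u ≤ ν−m} B_u S(ν−m,u)) = ∑_{m ≤ ν} (∑_{w ≤ m} C(m,w) A_w B_{m−w}) S(ν,m). -/
open Finset

/-- Stirling numbers of the second kind. -/
def stirling : ℕ → ℕ → ℕ
  | 0, 0 => 1
  | 0, _ + 1 => 0
  | _ + 1, 0 => 0
  | n + 1, k + 1 => (k + 1) * stirling n (k + 1) + stirling n k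

/-- `C(ν,m) = ∏_j C(ν_j, m_j)` for multiindices. -/
def mchoose (ν m : ℕ →₀ ℕ) : ℕ := ∏ j ∈ ν.support, (ν j).choose (m j)

/-- `S(μ,w) = ∏_j S(μ_j, w_j)`, a product of Stirling numbers of the second kind. -/
def mstirling (μ w : ℕ →₀ ℕ) : ℕ := ∏ j ∈ μ.support ∪ w.support, stirling (μ j) (w j)

lemma stirling_succ_zero (n : ℕ) : stirling (n + 1) 0 = 0 := rfl

lemma stirling_succ (n k : ℕ) :
    stirling (n + 1) (k + 1) = (k + 1) * stirling n (k + 1) + stirling n k := rfl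

lemma stirling_eq_zero_of_lt : ∀ {n k : ℕ}, n < k → stirling n k = 0
  | 0, _ + 1, _ => rfl
  | n + 1, k + 1, h => by
    rw [stirling_succ, stirling_eq_zero_of_lt (by omega), stirling_eq_zero_of_lt (by omega)]
    simp

lemma scalar_key (n : ℕ) : ∀ a b : ℕ,
    ∑ ij ∈ antidiagonal n, (n.choose ij.1 : ℝ) * ((stirling ij.1 a : ℝ) * (stirling ij.2 b : ℝ))
      = ((a + b).choose a : ℝ) * (stirling n (a + b) : ℝ) := by
  induction n with
  | zero =>
    intro a b
    match a, b with
    | 0, 0 => simp [stirling]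
    | a + 1, b =>
      simp [stirling_eq_zero_of_lt (Nat.succ_pos _),
        stirling_eq_zero_of_lt (show 0 < a + 1 + b by omega)]
    | 0, b + 1 => simp [stirling_eq_zero_of_lt (Nat.succ_pos _)]
  | succ n ih =>
    intro a b
    rw [Finset.sum_antidiagonal_choose_succ_mul (R := ℝ)
      (fun i j => (stirling i a : ℝ) * (stirling j b : ℝ)) n]
    have hsymm : ∑ ij ∈ antidiagonal n,
        (n.choose ij.2 : ℝ) * ((stirling (ij.1+1) a : ℝ) * (stirling ij.2 b : ℝ))
          = ∑ ij ∈ antidiagonal n,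
        (n.choose ij.1 : ℝ) * ((stirling (ij.1+1) a : ℝ) * (stirling ij.2 b : ℝ)) := by
      refine Finset.sum_congr rfl fun ij hij => ?_
      rw [HasAntidiagonal.mem_antidiagonal] at hij
      rw [← hij, Nat.choose_symm_of_eq_add rfl]
    rw [hsymm]
    match a, b with
    | 0, 0 =>
      simp [stirling_succ_zero]
    | 0, b + 1 =>
      have h1 : ∑ ij ∈ antidiagonal n,
          (n.choose ij.1 : ℝ) * ((stirling ij.1 0 : ℝ) * (stirling (ij.2+1) (b+1) : ℝ))
            = (b+1) * ∑ ij ∈ antidiagonal n,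
              (n.choose ij.1 : ℝ) * ((stirling ij.1 0 : ℝ) * (stirling ij.2 (b+1) : ℝ))
              + ∑ ij ∈ antidiagonal n,
              (n.choose ij.1 : ℝ) * ((stirling ij.1 0 : ℝ) * (stirling ij.2 b : ℝ)) := by
        rw [Finset.mul_sum, ← Finset.sum_add_distrib]
        refine Finset.sum_congr rfl fun ij hij => ?_
        rw [stirling_succ]; push_cast; ring
      have h2 : ∀ ij ∈ antidiagonal n,
          (n.choose ij.1 : ℝ) * ((stirling (ij.1+1) 0 : ℝ) * (stirling ij.2 (b+1) : ℝ)) = 0 := by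
        intro ij _; simp [stirling_succ_zero]
      rw [h1, Finset.sum_eq_zero h2, ih 0 (b+1), ih 0 b]
      simp [stirling_succ]
    | a + 1, 0 =>
      have h2 : ∀ ij ∈ antidiagonal n,
          (n.choose ij.1 : ℝ) * ((stirling ij.1 (a+1) : ℝ) * (stirling (ij.2+1) 0 : ℝ)) = 0 := by
        intro ij _; simp [stirling_succ_zero]
      have h1 : ∑ ij ∈ antidiagonal n,
          (n.choose ij.1 : ℝ) * ((stirling (ij.1+1) (a+1) : ℝ) * (stirling ij.2 0 : ℝ))
            = (a+1) * ∑ ij ∈ antidiagonal n,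
              (n.choose ij.1 : ℝ) * ((stirling ij.1 (a+1) : ℝ) * (stirling ij.2 0 : ℝ))
              + ∑ ij ∈ antidiagonal n,
              (n.choose ij.1 : ℝ) * ((stirling ij.1 a : ℝ) * (stirling ij.2 0 : ℝ)) := by
        rw [Finset.mul_sum, ← Finset.sum_add_distrib]
        refine Finset.sum_congr rfl fun ij hij => ?_
        rw [stirling_succ]; push_cast; ring
      rw [Finset.sum_eq_zero h2, h1, ih (a+1) 0, ih a 0]
      simp [stirling_succ]
    | a + 1, b + 1 =>
      have h1 : ∑ ij ∈ antidiagonal n,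
          (n.choose ij.1 : ℝ) * ((stirling ij.1 (a+1) : ℝ) * (stirling (ij.2+1) (b+1) : ℝ))
            = (b+1) * ∑ ij ∈ antidiagonal n,
              (n.choose ij.1 : ℝ) * ((stirling ij.1 (a+1) : ℝ) * (stirling ij.2 (b+1) : ℝ))
              + ∑ ij ∈ antidiagonal n,
              (n.choose ij.1 : ℝ) * ((stirling ij.1 (a+1) : ℝ) * (stirling ij.2 b : ℝ)) := by
        rw [Finset.mul_sum, ← Finset.sum_add_distrib]
        refine Finset.sum_congr rfl fun ij hij => ?_
        rw [stirling_succ]; push_cast; ring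
      have h2 : ∑ ij ∈ antidiagonal n,
          (n.choose ij.1 : ℝ) * ((stirling (ij.1+1) (a+1) : ℝ) * (stirling ij.2 (b+1) : ℝ))
            = (a+1) * ∑ ij ∈ antidiagonal n,
              (n.choose ij.1 : ℝ) * ((stirling ij.1 (a+1) : ℝ) * (stirling ij.2 (b+1) : ℝ))
              + ∑ ij ∈ antidiagonal n,
              (n.choose ij.1 : ℝ) * ((stirling ij.1 a : ℝ) * (stirling ij.2 (b+1) : ℝ)) := by
        rw [Finset.mul_sum, ← Finset.sum_add_distrib]
        refine Finset.sum_congr rfl fun ij hij => ?_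
        rw [stirling_succ]; push_cast; ring
      rw [h1, h2, ih (a+1) (b+1), ih (a+1) b, ih a (b+1)]
      have e1 : a + 1 + b = a + b + 1 := by omega
      have e2 : a + (b + 1) = a + b + 1 := by omega
      have e3 : a + 1 + (b + 1) = (a + b + 1) + 1 := by omega
      rw [e1, e2, e3, stirling_succ]
      have hp : ((a + b + 1 + 1).choose (a + 1) : ℝ)
          = ((a + b + 1).choose a : ℝ) + ((a + b + 1).choose (a + 1) : ℝ) := by
        rw [← Nat.cast_add, ← Nat.choose_succ_succ']
      push_cast
      rw [hp]
      ring

lemma Iic_nat_eq_range (n : ℕ) : Finset.Iic n = Finset.range (n+1) := by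
  ext k; simp [Nat.lt_succ_iff]

lemma scalar_key_Iic (n a b : ℕ) :
    ∑ k ∈ Finset.Iic n, (n.choose k : ℝ) * ((stirling k a : ℝ) * (stirling (n - k) b : ℝ))
      = ((a + b).choose a : ℝ) * (stirling n (a + b) : ℝ) := by
  rw [Iic_nat_eq_range, ← Finset.Nat.sum_antidiagonal_eq_sum_range_succ_mk
    (fun ij => (n.choose ij.1 : ℝ) * ((stirling ij.1 a : ℝ) * (stirling ij.2 b : ℝ)))]
  exact scalar_key n a b

lemma sum_Iic_prod (ν : ℕ →₀ ℕ) (f : ℕ → ℕ → ℝ) :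
    ∑ m ∈ Finset.Iic ν, ∏ j ∈ ν.support, f j (m j)
      = ∏ j ∈ ν.support, ∑ k ∈ Finset.Iic (ν j), f j k := by
  classical
  rw [Finset.prod_sum]
  have h : Finset.Iic ν = (ν.support.pi fun j => Finset.Iic (ν j)).map
      ⟨Finsupp.indicator ν.support, Finsupp.indicator_injective _⟩ := by
    ext m
    simp only [Finset.mem_Iic, Finset.mem_map, Finset.mem_pi, Function.Embedding.coeFn_mk]
    constructor
    · intro hm
      refine ⟨fun j _ => m j, fun j hj => by simpa using Finsupp.le_def.1 hm j, ?_⟩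
      ext j
      rw [Finsupp.indicator_apply]
      split_ifs with hj
      · rfl
      · exact (Finsupp.notMem_support_iff.1 fun hmem =>
          hj (Finsupp.support_mono hm hmem)).symm
    · rintro ⟨g, hg, rfl⟩
      rw [Finsupp.le_def]
      intro j
      rw [Finsupp.indicator_apply]
      split_ifs with hj
      · simpa using hg j hj
      · simp
  rw [h, Finset.sum_map]
  refine Finset.sum_congr rfl fun g hg => ?_
  show ∏ j ∈ ν.support, f j (Finsupp.indicator ν.support g j) = _
  rw [← Finset.prod_attach ν.support fun j => f j (Finsupp.indicator ν.support g j)]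
  refine Finset.prod_congr rfl fun x _ => ?_
  rw [Finsupp.indicator_of_mem x.2]

lemma mstirling_eq_prod {μ w : ℕ →₀ ℕ} {s : Finset ℕ} (hμ : μ.support ⊆ s)
    (hw : w.support ⊆ s) :
    mstirling μ w = ∏ j ∈ s, stirling (μ j) (w j) := by
  refine Finset.prod_subset (Finset.union_subset hμ hw) fun j _ hnj => ?_
  rw [Finset.mem_union, not_or] at hnj
  rw [Finsupp.notMem_support_iff.1 hnj.1, Finsupp.notMem_support_iff.1 hnj.2]
  rfl

lemma mchoose_eq_prod {μ w : ℕ →₀ ℕ} {s : Finset ℕ} (hμ : μ.support ⊆ s) (hw : w ≤ μ) :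
    mchoose μ w = ∏ j ∈ s, (μ j).choose (w j) := by
  refine Finset.prod_subset hμ fun j _ hnj => ?_
  have h1 : μ j = 0 := Finsupp.notMem_support_iff.1 hnj
  have h2 : w j = 0 := by have := Finsupp.le_def.1 hw j; omega
  rw [h1, h2]
  rfl

lemma mstirling_eq_zero {μ w : ℕ →₀ ℕ} (h : ¬ w ≤ μ) : mstirling μ w = 0 := by
  rw [Finsupp.le_def, not_forall] at h
  obtain ⟨j, hj⟩ := h
  rw [not_le] at hj
  refine Finset.prod_eq_zero (i := j) ?_ (stirling_eq_zero_of_lt hj)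
  exact Finset.mem_union_right _ (Finsupp.mem_support_iff.2 (by omega))

lemma key_multi (ν w u : ℕ →₀ ℕ) (hw : w ≤ ν) (hu : u ≤ ν) :
    ∑ m ∈ Finset.Iic ν,
        (mchoose ν m : ℝ) * ((mstirling m w : ℝ) * (mstirling (ν - m) u : ℝ))
      = (mchoose (w + u) w : ℝ) * (mstirling ν (w + u) : ℝ) := by
  have hsw : w.support ⊆ ν.support := Finsupp.support_mono hw
  have hsu : u.support ⊆ ν.support := Finsupp.support_mono hu
  have step : ∀ m ∈ Finset.Iic ν,
      (mchoose ν m : ℝ) * ((mstirling m w : ℝ) * (mstirling (ν - m) u : ℝ))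
        = ∏ j ∈ ν.support,
            ((ν j).choose (m j) : ℝ) * ((stirling (m j) (w j) : ℝ)
              * (stirling (ν j - m j) (u j) : ℝ)) := by
    intro m hm
    rw [Finset.mem_Iic] at hm
    rw [mchoose_eq_prod (subset_refl _) hm,
        mstirling_eq_prod (Finsupp.support_mono hm) hsw,
        mstirling_eq_prod (Finsupp.support_mono (tsub_le_self : ν - m ≤ ν)) hsu]
    push_cast
    rw [← Finset.prod_mul_distrib, ← Finset.prod_mul_distrib]
    refine Finset.prod_congr rfl fun j _ => ?_
    rfl
  rw [Finset.sum_congr rfl step,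
      sum_Iic_prod ν (fun j k => ((ν j).choose k : ℝ)
        * ((stirling k (w j) : ℝ) * (stirling (ν j - k) (u j) : ℝ))),
      mchoose_eq_prod (s := ν.support)
        (subset_trans Finsupp.support_add (Finset.union_subset hsw hsu))
        le_self_add,
      mstirling_eq_prod (subset_refl _)
        (subset_trans Finsupp.support_add (Finset.union_subset hsw hsu))]
  push_cast
  rw [← Finset.prod_mul_distrib]
  refine Finset.prod_congr rfl fun j _ => ?_
  rw [Pi.add_apply]
  exact scalar_key_Iic (ν j) (w j) (u j)

lemma sum_Iic_eq_sum_antidiagonal (m : ℕ →₀ ℕ) (f : (ℕ →₀ ℕ) → (ℕ →₀ ℕ) → ℝ) :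
    ∑ w ∈ Finset.Iic m, f w (m - w) = ∑ p ∈ antidiagonal m, f p.1 p.2 := by
  refine Finset.sum_nbij' (fun w => (w, m - w)) (fun p => p.1) ?_ ?_ ?_ ?_ ?_
  · intro w hw
    rw [Finset.mem_Iic] at hw
    rw [HasAntidiagonal.mem_antidiagonal]
    exact add_tsub_cancel_of_le hw
  · intro p hp
    rw [HasAntidiagonal.mem_antidiagonal] at hp
    rw [Finset.mem_Iic, ← hp]
    exact le_self_add
  · intro w _; rfl
  · intro p hp
    rw [HasAntidiagonal.mem_antidiagonal] at hp
    have h2 : m - p.1 = p.2 := by rw [← hp]; exact add_tsub_cancel_left _ _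
    show (p.1, m - p.1) = p
    rw [h2]
  · intro w _; rfl

/-- For arbitrary real sequences `(A_ν)`, `(B_ν)` and any multiindex `ν`:
`∑_{m ≤ ν} C(ν,m) (∑_{w ≤ m} A_w S(m,w)) (∑_{u ≤ ν−m} B_u S(ν−m,u))
  = ∑_{m ≤ ν} (∑_{w ≤ m} C(m,w) A_w B_{m−w}) S(ν,m)`. -/
theorem stirling_convolution_identity
    (A B : (ℕ →₀ ℕ) → ℝ) (ν : ℕ →₀ ℕ) :
    ∑ m ∈ Finset.Iic ν,
        (mchoose ν m : ℝ)
          * (∑ w ∈ Finset.Iic m, A w * (mstirling m w : ℝ))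
          * (∑ u ∈ Finset.Iic (ν - m), B u * (mstirling (ν - m) u : ℝ))
      = ∑ m ∈ Finset.Iic ν,
          (∑ w ∈ Finset.Iic m, (mchoose m w : ℝ) * A w * B (m - w))
            * (mstirling ν m : ℝ) := by
  classical
  -- LHS transformation
  have hL : ∀ m ∈ Finset.Iic ν,
      (mchoose ν m : ℝ)
          * (∑ w ∈ Finset.Iic m, A w * (mstirling m w : ℝ))
          * (∑ u ∈ Finset.Iic (ν - m), B u * (mstirling (ν - m) u : ℝ))
        = ∑ w ∈ Finset.Iic ν, ∑ u ∈ Finset.Iic ν,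
            A w * B u * ((mchoose ν m : ℝ)
              * ((mstirling m w : ℝ) * (mstirling (ν - m) u : ℝ))) := by
    intro m hm
    rw [Finset.mem_Iic] at hm
    have e1 : ∑ w ∈ Finset.Iic m, A w * (mstirling m w : ℝ)
        = ∑ w ∈ Finset.Iic ν, A w * (mstirling m w : ℝ) := by
      refine Finset.sum_subset (Finset.Iic_subset_Iic.2 hm) fun w _ hnw => ?_
      rw [Finset.mem_Iic] at hnw
      rw [mstirling_eq_zero hnw]
      simp
    have e2 : ∑ u ∈ Finset.Iic (ν - m), B u * (mstirling (ν - m) u : ℝ)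
        = ∑ u ∈ Finset.Iic ν, B u * (mstirling (ν - m) u : ℝ) := by
      refine Finset.sum_subset (Finset.Iic_subset_Iic.2 tsub_le_self) fun u _ hnu => ?_
      rw [Finset.mem_Iic] at hnu
      rw [mstirling_eq_zero hnu]
      simp
    rw [e1, e2, mul_assoc, Finset.sum_mul_sum, Finset.mul_sum]
    refine Finset.sum_congr rfl fun w _ => ?_
    rw [Finset.mul_sum]
    refine Finset.sum_congr rfl fun u _ => ?_
    ring
  have hLHS : ∑ m ∈ Finset.Iic ν,
      ∑ w ∈ Finset.Iic ν, ∑ u ∈ Finset.Iic ν,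
        A w * B u * ((mchoose ν m : ℝ)
          * ((mstirling m w : ℝ) * (mstirling (ν - m) u : ℝ)))
      = ∑ w ∈ Finset.Iic ν, ∑ u ∈ Finset.Iic ν,
          A w * B u * ((mchoose (w + u) w : ℝ) * (mstirling ν (w + u) : ℝ)) := by
    rw [Finset.sum_comm]
    refine Finset.sum_congr rfl fun w hw => ?_
    rw [Finset.mem_Iic] at hw
    rw [Finset.sum_comm]
    refine Finset.sum_congr rfl fun u hu => ?_
    rw [Finset.mem_Iic] at hu
    rw [← Finset.mul_sum, key_multi ν w u hw hu]
  have hfib : ∀ m ∈ Finset.Iic ν,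
      (antidiagonal m : Finset ((ℕ →₀ ℕ) × (ℕ →₀ ℕ)))
        = (Finset.Iic ν ×ˢ Finset.Iic ν).filter (fun p => p.1 + p.2 = m) := by
    intro m hm
    rw [Finset.mem_Iic] at hm
    ext p
    simp only [HasAntidiagonal.mem_antidiagonal, Finset.mem_filter, Finset.mem_product, Finset.mem_Iic]
    constructor
    · intro h
      refine ⟨⟨?_, ?_⟩, h⟩
      · exact le_trans (h ▸ le_self_add) hm
      · exact le_trans (h ▸ le_add_self) hm
    · exact fun h => h.2
  have hR : ∀ m ∈ Finset.Iic ν,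
      (∑ w ∈ Finset.Iic m, (mchoose m w : ℝ) * A w * B (m - w)) * (mstirling ν m : ℝ)
        = ∑ p ∈ (Finset.Iic ν ×ˢ Finset.Iic ν).filter (fun p => p.1 + p.2 = m),
            A p.1 * B p.2 * ((mchoose (p.1 + p.2) p.1 : ℝ)
              * (mstirling ν (p.1 + p.2) : ℝ)) := by
    intro m hm
    rw [← hfib m hm]
    rw [Finset.sum_mul,
        sum_Iic_eq_sum_antidiagonal m
          (fun w u => (mchoose m w : ℝ) * A w * B u * (mstirling ν m : ℝ))]
    refine Finset.sum_congr rfl fun p hp => ?_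
    rw [HasAntidiagonal.mem_antidiagonal] at hp
    rw [hp]
    ring
  have hRHS : ∑ m ∈ Finset.Iic ν,
      (∑ w ∈ Finset.Iic m, (mchoose m w : ℝ) * A w * B (m - w)) * (mstirling ν m : ℝ)
      = ∑ w ∈ Finset.Iic ν, ∑ u ∈ Finset.Iic ν,
          A w * B u * ((mchoose (w + u) w : ℝ) * (mstirling ν (w + u) : ℝ)) := by
    rw [Finset.sum_congr rfl hR,
      Finset.sum_fiberwise_eq_sum_filter (Finset.Iic ν ×ˢ Finset.Iic ν) (Finset.Iic ν)
        (fun p => p.1 + p.2)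
        (fun p => A p.1 * B p.2
          * ((mchoose (p.1 + p.2) p.1 : ℝ) * (mstirling ν (p.1 + p.2) : ℝ))),
      Finset.sum_filter, Finset.sum_product]
    refine Finset.sum_congr rfl fun w hw => Finset.sum_congr rfl fun u hu => ?_
    by_cases h : w + u ∈ Finset.Iic ν
    · rw [if_pos h]
    · rw [if_neg h, Finset.mem_Iic] at *
      rw [mstirling_eq_zero h]
      simp
  rw [Finset.sum_congr rfl hL, hLHS, hRHS]
end
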